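/- Fix σ > 0 and let 𝒢σ : ℝ² → ℝ be the isotropic Gaussian quantization kernel 𝒢σ(x) = (2πσ²)⁻¹ exp(−‖x‖²/(2σ²)). Let g : ℝ² → ℝ² be an invertible affine map, g(x) = A x + b with A an invertible linear map and b ∈ ℝ². Then the following are equivalent: (i) quantization commutes with g, i.e. (𝒢σ ⋆ I)(g x) = (𝒢σ ⋆ (I ∘ g))(x) for every integrable I : ℝ² → ℝ and every x ∈ ℝ²; (ii) g is a Euclidean isometry of the plane, i.e. A is orthogonal (‖A v‖ = ‖v‖ for all v ∈ ℝ²). In particular, the only invertible affine nuisances that commute with Gaussian quantization are the isometries of the plane: rotations, translations, and reflections. -/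

import Mathlib

open MeasureTheory

/-- The isotropic Gaussian quantization kernel on the plane at scale `σ`. -/
noncomputable def gauss2 (σ : ℝ) (x : EuclideanSpace ℝ (Fin 2)) : ℝ :=
  (2 * Real.pi * σ ^ 2)⁻¹ * Real.exp (-‖x‖ ^ 2 / (2 * σ ^ 2))

section aux

local notation "E₂" => EuclideanSpace ℝ (Fin 2)

lemma gauss2_continuous (σ : ℝ) : Continuous (gauss2 σ) := by
  unfold gauss2; fun_prop

lemma gauss2_pos {σ : ℝ} (hσ : 0 < σ) (x : E₂) : 0 < gauss2 σ x := by
  unfold gauss2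
  have := Real.pi_pos
  positivity

lemma gauss2_le {σ : ℝ} (hσ : 0 < σ) (x : E₂) : gauss2 σ x ≤ (2 * Real.pi * σ ^ 2)⁻¹ := by
  unfold gauss2
  have hπ := Real.pi_pos
  have h1 : Real.exp (-‖x‖ ^ 2 / (2 * σ ^ 2)) ≤ 1 := by
    rw [Real.exp_le_one_iff]
    apply div_nonpos_of_nonpos_of_nonneg
    · simpa using sq_nonneg ‖x‖
    · positivity
  calc (2 * Real.pi * σ ^ 2)⁻¹ * Real.exp (-‖x‖ ^ 2 / (2 * σ ^ 2))
      ≤ (2 * Real.pi * σ ^ 2)⁻¹ * 1 := by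
        apply mul_le_mul_of_nonneg_left h1 (by positivity)
    _ = (2 * Real.pi * σ ^ 2)⁻¹ := mul_one _

lemma gauss2_norm_eq {σ : ℝ} {a b : E₂} (h : ‖a‖ = ‖b‖) : gauss2 σ a = gauss2 σ b := by
  unfold gauss2; rw [h]

lemma gauss2_neg (σ : ℝ) (x : E₂) : gauss2 σ (-x) = gauss2 σ x :=
  gauss2_norm_eq (norm_neg x)

lemma gauss2_exp_integrable {σ : ℝ} (hσ : 0 < σ) :
    Integrable (fun x : E₂ => Real.exp (-‖x‖ ^ 2 / (2 * σ ^ 2))) := by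
  have hb : (0 : ℝ) < (2 * σ ^ 2)⁻¹ := by positivity
  have hre : (0:ℝ) < (((2 * σ ^ 2)⁻¹ : ℝ) : ℂ).re := by
    rwa [Complex.ofReal_re]
  have h := (GaussianFourier.integrable_cexp_neg_mul_sq_norm_add_of_euclideanSpace
    (ι := Fin 2) (b := (((2 * σ ^ 2)⁻¹ : ℝ) : ℂ)) hre 0 0).re
  refine h.congr (Filter.Eventually.of_forall fun x => ?_)
  have : (-(((2 * σ ^ 2)⁻¹ : ℝ) : ℂ) * (‖x‖ : ℂ) ^ 2 + 0 * ((inner ℝ (0 : E₂) x : ℝ) : ℂ))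
      = ((-‖x‖ ^ 2 / (2 * σ ^ 2) : ℝ) : ℂ) := by
    push_cast
    ring
  simp only [this]
  exact (RCLike.re_to_complex).trans (Complex.exp_ofReal_re _)

lemma gauss2_integrable {σ : ℝ} (hσ : 0 < σ) : Integrable (gauss2 σ) := by
  unfold gauss2
  exact (gauss2_exp_integrable hσ).const_mul _

lemma det_ne_zero_of_equiv (e : E₂ ≃ₗ[ℝ] E₂) :
    LinearMap.det (e : E₂ →ₗ[ℝ] E₂) ≠ 0 :=
  e.isUnit_det'.ne_zero

/-- Change of variables for a linear equivalence on the plane. -/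
lemma integral_comp_linEquiv (e : E₂ ≃ₗ[ℝ] E₂) (g : E₂ → ℝ) :
    (∫ y, g (e y)) = |LinearMap.det (e : E₂ →ₗ[ℝ] E₂)|⁻¹ * ∫ z, g z := by
  let m : E₂ ≃ᵐ E₂ := e.toContinuousLinearEquiv.toHomeomorph.toMeasurableEquiv
  have hmap : Measure.map m volume
      = ENNReal.ofReal |(LinearMap.det (e : E₂ →ₗ[ℝ] E₂))⁻¹| • volume := by
    rw [show (⇑m : E₂ → E₂) = ⇑(e : E₂ →ₗ[ℝ] E₂) from rfl]
    exact Measure.map_linearMap_addHaar_eq_smul_addHaar volume (det_ne_zero_of_equiv e)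
  calc (∫ y, g (e y))
      = ∫ z, g z ∂(Measure.map m volume) := (MeasureTheory.integral_map_equiv m g).symm
    _ = |LinearMap.det (e : E₂ →ₗ[ℝ] E₂)|⁻¹ * ∫ z, g z := by
        rw [hmap, integral_smul_measure, ENNReal.toReal_ofReal (abs_nonneg _), abs_inv,
          smul_eq_mul]

lemma integrable_comp_linEquiv (e : E₂ ≃ₗ[ℝ] E₂) {g : E₂ → ℝ} (hg : Integrable g) :
    Integrable (fun y => g (e y)) := by
  let m : E₂ ≃ᵐ E₂ := e.toContinuousLinearEquiv.toHomeomorph.toMeasurableEquiv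
  have hmap : Measure.map m volume
      = ENNReal.ofReal |(LinearMap.det (e : E₂ →ₗ[ℝ] E₂))⁻¹| • volume := by
    rw [show (⇑m : E₂ → E₂) = ⇑(e : E₂ →ₗ[ℝ] E₂) from rfl]
    exact Measure.map_linearMap_addHaar_eq_smul_addHaar volume (det_ne_zero_of_equiv e)
  have h0 : ENNReal.ofReal |(LinearMap.det (e : E₂ →ₗ[ℝ] E₂))⁻¹| ≠ 0 := by
    simp only [ne_eq, ENNReal.ofReal_eq_zero, not_le, abs_pos]
    exact inv_ne_zero (det_ne_zero_of_equiv e)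
  have : Integrable (g ∘ m) volume := by
    rw [← m.measurableEmbedding.integrable_map_iff, hmap,
      integrable_smul_measure h0 ENNReal.ofReal_ne_top]
    exact hg
  exact this

end aux

/-- An invertible affine map `x ↦ A x + b` commutes with Gaussian quantization on every
integrable image if and only if it is a Euclidean isometry of the plane. -/
theorem stmt_3 (σ : ℝ) (hσ : 0 < σ)
    (A : EuclideanSpace ℝ (Fin 2) →ₗ[ℝ] EuclideanSpace ℝ (Fin 2))
    (hA : Function.Bijective ⇑A) (b : EuclideanSpace ℝ (Fin 2)) :
    (∀ I : EuclideanSpace ℝ (Fin 2) → ℝ, Integrable I →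
        ∀ x, (∫ y, gauss2 σ (A x + b - y) * I y) = ∫ y, gauss2 σ (x - y) * I (A y + b)) ↔
      ∀ v, ‖A v‖ = ‖v‖ := by
  set e : EuclideanSpace ℝ (Fin 2) ≃ₗ[ℝ] EuclideanSpace ℝ (Fin 2) :=
    LinearEquiv.ofBijective A hA with he
  have heA : ∀ y, e y = A y := fun y => rfl
  have hcoe : (e : EuclideanSpace ℝ (Fin 2) →ₗ[ℝ] EuclideanSpace ℝ (Fin 2)) = A := rfl
  constructor
  · -- forward direction
    intro H
    set c : ℝ := |LinearMap.det A|⁻¹ with hc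
    have hdet : LinearMap.det A ≠ 0 := by rw [← hcoe]; exact det_ne_zero_of_equiv e
    have hcpos : 0 < c := by rw [hc]; positivity
    set f : EuclideanSpace ℝ (Fin 2) → ℝ :=
      fun z => gauss2 σ (b - z) - c * gauss2 σ (e.symm (b - z)) with hf
    have hesymm_cont : Continuous fun z : EuclideanSpace ℝ (Fin 2) => (e.symm (b - z)) :=
      (e.symm.toLinearMap.continuous_of_finiteDimensional).comp (by fun_prop)
    have hfcont : Continuous f := by
      apply Continuous.sub
      · exact (gauss2_continuous σ).comp (by fun_prop)
      · exact continuous_const.mul ((gauss2_continuous σ).comp hesymm_cont)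
    have hg1int : Integrable (fun z : EuclideanSpace ℝ (Fin 2) => gauss2 σ (b - z)) :=
      (gauss2_integrable hσ).comp_sub_left b
    have hg2int : Integrable (fun z : EuclideanSpace ℝ (Fin 2) => gauss2 σ (e.symm (b - z))) := by
      have h0 : Integrable (fun w : EuclideanSpace ℝ (Fin 2) => gauss2 σ (e.symm w)) :=
        integrable_comp_linEquiv e.symm (gauss2_integrable hσ)
      exact h0.comp_sub_left b
    have hfint : Integrable f := hg1int.sub (hg2int.const_mul c)
    -- key claim
    have key : ∀ I : EuclideanSpace ℝ (Fin 2) → ℝ, Integrable I → (∫ z, f z * I z) = 0 := by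
      intro I hI
      have h := H I hI 0
      simp only [map_zero, zero_add] at h
      -- rewrite RHS of h via change of variables
      let G : EuclideanSpace ℝ (Fin 2) → ℝ := fun z => gauss2 σ (e.symm (b - z)) * I z
      have hGy : ∀ y : EuclideanSpace ℝ (Fin 2),
          gauss2 σ ((0 : EuclideanSpace ℝ (Fin 2)) - y) * I (A y + b) = G (e y + b) := by
        intro y
        have h1 : e.symm (b - (e y + b)) = -y := by
          have h2 : b - (e y + b) = -(e y) := by abel
          rw [h2, map_neg, e.symm_apply_apply]
        show gauss2 σ (0 - y) * I (A y + b) = gauss2 σ (e.symm (b - (e y + b))) * I (e y + b)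
        rw [h1, zero_sub, gauss2_neg, heA y]
      have hrhs : (∫ y, gauss2 σ ((0 : EuclideanSpace ℝ (Fin 2)) - y) * I (A y + b))
          = c * ∫ z, G z := by
        rw [show (fun y : EuclideanSpace ℝ (Fin 2) =>
            gauss2 σ ((0 : EuclideanSpace ℝ (Fin 2)) - y) * I (A y + b))
          = fun y => G (e y + b) from funext hGy]
        have h2 : (∫ y, G (e y + b))
            = |LinearMap.det (e : EuclideanSpace ℝ (Fin 2) →ₗ[ℝ] EuclideanSpace ℝ (Fin 2))|⁻¹
              * ∫ z, G (z + b) :=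
          integral_comp_linEquiv e (fun w => G (w + b))
        rw [h2, integral_add_right_eq_self G b, hcoe]
      rw [hrhs] at h
      -- integrability of both products
      have h1int : Integrable (fun z : EuclideanSpace ℝ (Fin 2) => gauss2 σ (b - z) * I z) := by
        apply hI.bdd_mul ((gauss2_continuous σ).comp (by fun_prop)).aestronglyMeasurable
        refine Filter.Eventually.of_forall fun z => show _ ≤ (2 * Real.pi * σ ^ 2)⁻¹ from ?_
        simp only [Function.comp_apply, Real.norm_eq_abs]
        rw [abs_of_nonneg (gauss2_pos hσ _).le]
        exact gauss2_le hσ _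
      have h2int : Integrable G := by
        apply hI.bdd_mul ((gauss2_continuous σ).comp hesymm_cont).aestronglyMeasurable
        refine Filter.Eventually.of_forall fun z => show _ ≤ (2 * Real.pi * σ ^ 2)⁻¹ from ?_
        simp only [Function.comp_apply, Real.norm_eq_abs]
        rw [abs_of_nonneg (gauss2_pos hσ _).le]
        exact gauss2_le hσ _
      have hsplit : (∫ z, f z * I z)
          = (∫ z, gauss2 σ (b - z) * I z) - c * ∫ z, G z := by
        have hpt : (fun z => f z * I z)
            = fun z => gauss2 σ (b - z) * I z
              - c * (gauss2 σ (e.symm (b - z)) * I z) := by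
          funext z
          simp only [hf]
          ring
        rw [hpt, integral_sub h1int (h2int.const_mul c), MeasureTheory.integral_const_mul c _]
      rw [hsplit, ← h, sub_self]
    -- apply key to f itself
    have hsq : (∫ z, f z * f z) = 0 := key f hfint
    have hffint : Integrable (fun z => f z * f z) := by
      apply hfint.bdd_mul hfcont.aestronglyMeasurable
      refine Filter.Eventually.of_forall fun z => show _ ≤ (2 * Real.pi * σ ^ 2)⁻¹ + c * (2 * Real.pi * σ ^ 2)⁻¹ from ?_
      simp only [hf, Real.norm_eq_abs]
      have h1 := gauss2_le hσ (b - z)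
      have h2 := gauss2_le hσ (e.symm (b - z))
      have p1 := (gauss2_pos hσ (b - z)).le
      have p2 := (gauss2_pos hσ (e.symm (b - z))).le
      have habs : |gauss2 σ (b - z) - c * gauss2 σ (e.symm (b - z))|
          ≤ gauss2 σ (b - z) + c * gauss2 σ (e.symm (b - z)) := by
        rw [abs_sub_le_iff]
        constructor <;> nlinarith
      refine habs.trans ?_
      have h3 : c * gauss2 σ (e.symm (b - z)) ≤ c * (2 * Real.pi * σ ^ 2)⁻¹ :=
        mul_le_mul_of_nonneg_left h2 hcpos.le
      linarith
    have hae : (fun z => f z * f z) =ᵐ[volume] 0 :=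
      (integral_eq_zero_iff_of_nonneg (fun z => mul_self_nonneg (f z)) hffint).mp hsq
    have hzero : ∀ z, f z = 0 := by
      have heq := (Continuous.ae_eq_iff_eq volume (hfcont.mul hfcont) continuous_const).mp hae
      intro z
      have hz : f z * f z = 0 := congrFun heq z
      exact mul_self_eq_zero.mp hz
    -- c = 1
    have hc1 : c = 1 := by
      have hb := hzero b
      simp only [hf, sub_self, map_zero] at hb
      have hpos := gauss2_pos hσ (0 : EuclideanSpace ℝ (Fin 2))
      nlinarith [hb, hpos]
    -- conclude isometry
    intro v
    have hv := hzero (A v + b)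
    have harg : b - (A v + b) = -(A v) := by abel
    have hsymm : e.symm (-(A v)) = -v := by
      rw [map_neg]
      congr 1
      rw [show A v = e v from (heA v).symm, e.symm_apply_apply]
    simp only [hf] at hv
    simp only [harg, hsymm, gauss2_neg, hc1, one_mul, sub_eq_zero] at hv
    -- from gauss2 σ (A v) = gauss2 σ v deduce norms equal
    unfold gauss2 at hv
    have hconst : (0:ℝ) < (2 * Real.pi * σ ^ 2)⁻¹ := by
      have := Real.pi_pos; positivity
    have hexp : Real.exp (-‖A v‖ ^ 2 / (2 * σ ^ 2)) = Real.exp (-‖v‖ ^ 2 / (2 * σ ^ 2)) :=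
      mul_left_cancel₀ hconst.ne' hv
    have h3 := Real.exp_injective hexp
    have hden : (0:ℝ) < 2 * σ ^ 2 := by positivity
    have hsq2 : ‖A v‖ ^ 2 = ‖v‖ ^ 2 := by
      field_simp at h3
      nlinarith [norm_nonneg (A v), norm_nonneg v, h3]
    calc ‖A v‖ = Real.sqrt (‖A v‖ ^ 2) := (Real.sqrt_sq (norm_nonneg _)).symm
      _ = Real.sqrt (‖v‖ ^ 2) := by rw [hsq2]
      _ = ‖v‖ := Real.sqrt_sq (norm_nonneg _)
  · -- reverse direction
    intro hiso I hI x
    set li : EuclideanSpace ℝ (Fin 2) ≃ₗᵢ[ℝ] EuclideanSpace ℝ (Fin 2) :=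
      ⟨e, fun v => hiso v⟩ with hli
    let G : EuclideanSpace ℝ (Fin 2) → ℝ := fun z => gauss2 σ (A x + b - z) * I z
    have hGy : ∀ y : EuclideanSpace ℝ (Fin 2),
        gauss2 σ (x - y) * I (A y + b) = G (li y + b) := by
      intro y
      have h1 : A x + b - (A y + b) = A (x - y) := by
        rw [map_sub]; abel
      have h2 : gauss2 σ (A (x - y)) = gauss2 σ (x - y) := gauss2_norm_eq (hiso _)
      show gauss2 σ (x - y) * I (A y + b) = gauss2 σ (A x + b - (li y + b)) * I (li y + b)
      have h3 : (li y : EuclideanSpace ℝ (Fin 2)) = A y := rfl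
      rw [h3, h1, h2]
    calc (∫ y, gauss2 σ (A x + b - y) * I y) = ∫ z, G z := rfl
      _ = ∫ w, G (w + b) := (integral_add_right_eq_self G b).symm
      _ = ∫ y, G (li y + b) := (MeasureTheory.integral_comp li (fun w => G (w + b))).symm
      _ = ∫ y, gauss2 σ (x - y) * I (A y + b) := by
          congr 1 with y
          exact (hGy y).symm
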